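/- For all integers k ≥ 1 and i ≥ 0, the derivative (with respect to λ) of the polynomial f_k(k+i, λ), evaluated at λ = k+i, equals k! · ∑_{j=0}^{k−1} binom(k−j+i−1, i) · 2^j / (j+1). -/

import Mathlib

/-- The polynomials `f_k(d, λ)`: `f_1 = λ`, `f_2 = λ² - d`, and
`f_k = λ·f_{k-1} - (k-1)(d-k+2)·f_{k-2}` for `k ≥ 3`. -/
noncomputable def fPoly (d : ℝ) : ℕ → Polynomial ℝ
  | 0 => 1
  | 1 => Polynomial.X
  | 2 => Polynomial.X ^ 2 - Polynomial.C d
  | (m + 3) =>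
      Polynomial.X * fPoly d (m + 2) -
        Polynomial.C ((((m : ℝ) + 3) - 1) * (d - ((m : ℝ) + 3) + 2)) * fPoly d (m + 1)

/-- coefficient `C(n, j+1) · j! · 2^j` -/
def ccoef (n j : ℕ) : ℕ := n.choose (j+1) * j.factorial * 2^j

/-- the claimed value of the derivative of `fPoly d n` at `d` -/
noncomputable def Bsum (d : ℝ) (n : ℕ) : ℝ :=
  ∑ j ∈ Finset.range n, (ccoef n j : ℝ) * ∏ t ∈ Finset.Ico (j+1) n, (d - (t : ℝ))

lemma eval_fPoly (d : ℝ) : ∀ n, (fPoly d n).eval d = ∏ t ∈ Finset.range n, (d - (t : ℝ)) := by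
  intro n
  induction n using Nat.strong_induction_on with
  | _ n ih =>
    match n with
    | 0 => simp [fPoly]
    | 1 => simp [fPoly]
    | 2 => simp [fPoly, Finset.prod_range_succ]; ring
    | (m+3) =>
      have h1 := ih (m+2) (by omega)
      have h2 := ih (m+1) (by omega)
      simp only [fPoly, Polynomial.eval_sub, Polynomial.eval_mul, Polynomial.eval_X,
        Polynomial.eval_C, h1, h2]
      rw [Finset.prod_range_succ (fun t : ℕ => d - (t:ℝ)) (m+2),
        Finset.prod_range_succ (fun t : ℕ => d - (t:ℝ)) (m+1)]
      push_cast
      ring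

lemma key (d : ℝ) (m : ℕ) :
    Bsum d (m+3)
      = (∏ t ∈ Finset.range (m+2), (d - (t : ℝ))) + d * Bsum d (m+2)
        - (((m : ℝ)+2) * (d - ((m : ℝ)+1))) * Bsum d (m+1) := by
  set g : ℕ → ℝ := fun j => ∏ t ∈ Finset.Ico j (m+2), (d - (t : ℝ)) with hgdef
  have hg : ∀ j, j < m+2 → g j = (d - (j : ℝ)) * g (j+1) := by
    intro j hj
    simp only [hgdef]
    exact Finset.prod_eq_prod_Ico_succ_bot hj _
  have hgtop : g (m+2) = 1 := by simp [hgdef]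
  have hL : Bsum d (m+3)
      = (∑ j ∈ Finset.range (m+3), (ccoef (m+3) j : ℝ) * g j)
        - ∑ j ∈ Finset.range (m+2), ((((m:ℝ)+2) - j) * (ccoef (m+3) j : ℝ)) * g (j+1) := by
    simp only [Bsum]
    rw [Finset.sum_range_succ (fun j => (ccoef (m+3) j : ℝ) *
          ∏ t ∈ Finset.Ico (j+1) (m+3), (d - (t : ℝ))) (m+2),
        Finset.sum_range_succ (fun j => (ccoef (m+3) j : ℝ) * g j) (m+2)]
    have step : ∀ j ∈ Finset.range (m+2),
        (ccoef (m+3) j : ℝ) * ∏ t ∈ Finset.Ico (j+1) (m+3), (d - (t : ℝ))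
          = (ccoef (m+3) j : ℝ) * g j
             - ((((m:ℝ)+2) - j) * (ccoef (m+3) j : ℝ)) * g (j+1) := by
      intro j hj
      rw [Finset.mem_range] at hj
      rw [show (∏ t ∈ Finset.Ico (j+1) (m+3), (d - (t : ℝ)))
            = (∏ t ∈ Finset.Ico (j+1) (m+2), (d - (t : ℝ))) * (d - ((m+2 : ℕ) : ℝ)) from
          Finset.prod_Ico_succ_top (by omega) _]
      rw [show (∏ t ∈ Finset.Ico (j+1) (m+2), (d - (t : ℝ))) = g (j+1) from rfl]
      rw [hg j hj]
      push_cast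
      ring
    rw [Finset.sum_congr rfl step, Finset.sum_sub_distrib]
    rw [show (∏ t ∈ Finset.Ico (m+2+1) (m+3), (d - (t : ℝ))) = 1 by simp]
    rw [hgtop]
    ring
  have hR2 : d * Bsum d (m+2)
      = (∑ j ∈ Finset.range (m+2), (ccoef (m+2) j : ℝ) * g j)
        + ∑ j ∈ Finset.range (m+2), ((j : ℝ) * (ccoef (m+2) j : ℝ)) * g (j+1) := by
    simp only [Bsum]
    rw [Finset.mul_sum, ← Finset.sum_add_distrib]
    refine Finset.sum_congr rfl fun j hj => ?_
    rw [Finset.mem_range] at hj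
    rw [show (∏ t ∈ Finset.Ico (j+1) (m+2), (d - (t : ℝ))) = g (j+1) from rfl, hg j hj]
    ring
  have hR3 : (((m : ℝ)+2) * (d - ((m : ℝ)+1))) * Bsum d (m+1)
      = ∑ j ∈ Finset.range (m+1), ((((m:ℝ)+2)) * (ccoef (m+1) j : ℝ)) * g (j+1) := by
    simp only [Bsum]
    rw [Finset.mul_sum]
    refine Finset.sum_congr rfl fun j hj => ?_
    rw [Finset.mem_range] at hj
    rw [show g (j+1)
          = (∏ t ∈ Finset.Ico (j+1) (m+1), (d - (t : ℝ))) * (d - ((m+1 : ℕ) : ℝ)) from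
        Finset.prod_Ico_succ_top (by omega) _]
    push_cast
    ring
  have hA : (∏ t ∈ Finset.range (m+2), (d - (t : ℝ))) = g 0 := by
    simp only [hgdef]
    rw [Finset.range_eq_Ico]
  have hz2 : ccoef (m+2) (m+2) = 0 := by
    have : (m+2).choose (m+2+1) = 0 := Nat.choose_eq_zero_of_lt (by omega)
    simp [ccoef, this]
  have hz3 : ccoef (m+1) (m+1) = 0 := by
    have : (m+1).choose (m+1+1) = 0 := Nat.choose_eq_zero_of_lt (by omega)
    simp [ccoef, this]
  have hE2 : (∑ j ∈ Finset.range (m+2), (ccoef (m+2) j : ℝ) * g j)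
      = ∑ j ∈ Finset.range (m+3), (ccoef (m+2) j : ℝ) * g j := by
    rw [Finset.sum_range_succ (fun j => (ccoef (m+2) j : ℝ) * g j) (m+2), hz2]
    simp
  have hE3 : (∑ j ∈ Finset.range (m+1), ((((m:ℝ)+2)) * (ccoef (m+1) j : ℝ)) * g (j+1))
      = ∑ j ∈ Finset.range (m+2), ((((m:ℝ)+2)) * (ccoef (m+1) j : ℝ)) * g (j+1) := by
    rw [Finset.sum_range_succ
      (fun j => ((((m:ℝ)+2)) * (ccoef (m+1) j : ℝ)) * g (j+1)) (m+1), hz3]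
    simp
  have hsplit : ∀ j, (ccoef (m+3) j : ℝ)
      = ((j.factorial * 2^j * (m+2).choose j : ℕ) : ℝ) + (ccoef (m+2) j : ℝ) := by
    intro j
    have hn : ccoef (m+3) j = j.factorial * 2^j * (m+2).choose j + ccoef (m+2) j := by
      simp only [ccoef]
      rw [show (m+3).choose (j+1) = (m+2).choose j + (m+2).choose (j+1) from
        Nat.choose_succ_succ (m+2) j]
      ring
    exact_mod_cast congrArg (Nat.cast : ℕ → ℝ) hn
  have hS1 : (∑ j ∈ Finset.range (m+3), (ccoef (m+3) j : ℝ) * g j)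
      = (∑ j ∈ Finset.range (m+3), ((j.factorial * 2^j * (m+2).choose j : ℕ) : ℝ) * g j)
        + ∑ j ∈ Finset.range (m+3), (ccoef (m+2) j : ℝ) * g j := by
    rw [← Finset.sum_add_distrib]
    exact Finset.sum_congr rfl fun j _ => by rw [hsplit j]; ring
  have hPeel : (∑ j ∈ Finset.range (m+3), ((j.factorial * 2^j * (m+2).choose j : ℕ) : ℝ) * g j)
      = g 0 + ∑ j ∈ Finset.range (m+2),
          (((j+1).factorial * 2^(j+1) * (m+2).choose (j+1) : ℕ) : ℝ) * g (j+1) := by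
    rw [Finset.sum_range_succ'
      (fun j => ((j.factorial * 2^j * (m+2).choose j : ℕ) : ℝ) * g j) (m+2)]
    simp
    ring
  have hcoef : ∀ j ∈ Finset.range (m+2),
      (((j+1).factorial * 2^(j+1) * (m+2).choose (j+1) : ℕ) : ℝ) * g (j+1)
        = ((j : ℝ) * (ccoef (m+2) j : ℝ)) * g (j+1)
          + (((((m:ℝ)+2) - j) * (ccoef (m+3) j : ℝ)) * g (j+1)
            - ((((m:ℝ)+2)) * (ccoef (m+1) j : ℝ)) * g (j+1)) := by
    intro j hj
    rw [Finset.mem_range] at hj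
    have hF1 : ((m+3).choose (j+1) : ℝ) = ((m+2).choose j : ℝ) + ((m+2).choose (j+1) : ℝ) := by
      exact_mod_cast congrArg (Nat.cast : ℕ → ℝ) (Nat.choose_succ_succ (m+2) j)
    have hF2 : ((j:ℝ)+1) * ((m+2).choose (j+1) : ℝ)
        = (((m:ℝ)+2) - j) * ((m+2).choose j : ℝ) := by
      have hn := Nat.choose_succ_right_eq (m+2) j
      have hcast := congrArg (Nat.cast : ℕ → ℝ) hn
      push_cast [Nat.cast_sub (show j ≤ m+2 by omega)] at hcast
      linarith [hcast]
    have hF3 : (((m:ℝ)+1) - j) * ((m+2).choose (j+1) : ℝ)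
        = (((m:ℝ)+2)) * ((m+1).choose (j+1) : ℝ) := by
      have hn : (m+2) * ((m+1).choose (j+1)) = (m+2).choose (j+1) * (m+1-j) := by
        have n1 := Nat.choose_succ_right_eq (m+2) (j+1)
        have n2 := Nat.add_one_mul_choose_eq (m+1) (j+1)
        calc (m+2) * (m+1).choose (j+1) = (m+1).succ * (m+1).choose (j+1) := by
              rw [Nat.succ_eq_add_one]
          _ = (m+1).succ.choose (j+1).succ * (j+1).succ := n2
          _ = (m+2).choose (j+1+1) * (j+1+1) := rfl
          _ = (m+2).choose (j+1) * (m+2 - (j+1)) := n1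
          _ = (m+2).choose (j+1) * (m+1-j) := by congr 1; omega
      have hcast := congrArg (Nat.cast : ℕ → ℝ) hn
      push_cast [Nat.cast_sub (show j ≤ m+1 by omega)] at hcast
      linarith [hcast]
    simp only [ccoef]
    push_cast [Nat.factorial_succ, pow_succ]
    linear_combination (g (j+1) * (j.factorial : ℝ) * 2^j) *
      (-((((m:ℝ)+2) - (j:ℝ))) * hF1 + hF2 - hF3)
  have hsum := Finset.sum_congr rfl hcoef
  rw [hL, hR2, hR3, hA, hE2, hE3, hS1, hPeel, hsum, Finset.sum_add_distrib,
    Finset.sum_sub_distrib]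
  ring

lemma deriv_fPoly (d : ℝ) : ∀ n, (Polynomial.derivative (fPoly d n)).eval d = Bsum d n := by
  intro n
  induction n using Nat.strong_induction_on with
  | _ n ih =>
    match n with
    | 0 => simp [fPoly, Bsum]
    | 1 => simp [fPoly, Bsum, ccoef]
    | 2 =>
      simp [fPoly, Bsum, ccoef, Finset.sum_range_succ]
      ring
    | (m+3) =>
      have h1 := ih (m+2) (by omega)
      have h2 := ih (m+1) (by omega)
      have e1 := eval_fPoly d (m+2)
      simp only [fPoly, map_sub, Polynomial.derivative_mul, Polynomial.derivative_X,
        Polynomial.derivative_C, Polynomial.eval_sub, Polynomial.eval_add, Polynomial.eval_mul,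
        Polynomial.eval_X, Polynomial.eval_C, one_mul, zero_mul, add_zero, mul_zero, zero_add]
      rw [h1, h2, e1, key d m]
      ring

lemma natprod (i : ℕ) : ∀ r : ℕ, ∏ s ∈ Finset.range r, (r + i - s) = r.factorial * (r+i).choose i := by
  intro r
  induction r with
  | zero => simp
  | succ r ih =>
    rw [Finset.prod_range_succ']
    have hc : ∀ s ∈ Finset.range r, (r + 1 + i - (s + 1)) = r + i - s := by
      intro s _; omega
    rw [Finset.prod_congr rfl hc, ih]
    have h2 : (r+1+i) * ((r+i).choose i) = (r+1) * ((r+1+i).choose i) := by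
      have a : (r+i).succ * (r+i).choose i = (r+i).succ.choose i.succ * i.succ :=
        Nat.add_one_mul_choose_eq (r+i) i
      have b := Nat.choose_succ_right_eq (r+1+i) i
      have hsub : r+1+i - i = r+1 := by omega
      rw [hsub] at b
      have e1 : (r+i).succ = r + 1 + i := by omega
      rw [e1] at a
      rw [a, Nat.succ_eq_add_one, b]
      ring
    have : r + 1 + i - 0 = r + 1 + i := by omega
    rw [this]
    calc r.factorial * (r+i).choose i * (r+1+i)
        = r.factorial * ((r+1+i) * ((r+i).choose i)) := by ring
      _ = r.factorial * ((r+1) * ((r+1+i).choose i)) := by rw [h2]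
      _ = (r+1).factorial * ((r+1+i).choose i) := by rw [Nat.factorial_succ]; ring

theorem fPoly_derivative_eval (k i : ℕ) (hk : 1 ≤ k) :
    (Polynomial.derivative (fPoly ((k : ℝ) + i) k)).eval ((k : ℝ) + i) =
      (k.factorial : ℝ) *
        ∑ j ∈ Finset.range k, ((k - j + i - 1).choose i : ℝ) * 2 ^ j / (j + 1) := by
  rw [deriv_fPoly]
  simp only [Bsum]
  rw [Finset.mul_sum]
  refine Finset.sum_congr rfl fun j hj => ?_
  rw [Finset.mem_range] at hj
  obtain ⟨r, rfl⟩ : ∃ r, k = j + 1 + r := ⟨k - (j+1), by omega⟩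
  have hidx : j + 1 + r - j + i - 1 = r + i := by omega
  rw [hidx]
  have hN : j + 1 + r - (j + 1) = r := by omega
  rw [Finset.prod_Ico_eq_prod_range, hN]
  have hp : (∏ s ∈ Finset.range r, (((j+1+r : ℕ) : ℝ) + (i : ℕ) - ((j+1+s : ℕ) : ℝ)))
      = ((r.factorial * (r+i).choose i : ℕ) : ℝ) := by
    rw [← natprod i r, Nat.cast_prod]
    refine Finset.prod_congr rfl fun s hs => ?_
    rw [Finset.mem_range] at hs
    rw [Nat.cast_sub (by omega)]
    push_cast
    ring
  push_cast at hp ⊢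
  rw [hp]
  have hf : ((j+1+r).choose (j+1) * (j+1).factorial * r.factorial : ℕ) = (j+1+r).factorial := by
    have := Nat.choose_mul_factorial_mul_factorial (show j+1 ≤ j+1+r by omega)
    rwa [show j+1+r - (j+1) = r by omega] at this
  rw [← mul_div_assoc, eq_div_iff (by positivity : ((j : ℝ) + 1) ≠ 0)]
  simp only [ccoef]
  have hf' : (((j+1+r).choose (j+1) : ℝ)) * (((j+1) * j.factorial : ℕ) : ℝ) * (r.factorial : ℝ)
      = ((j+1+r).factorial : ℝ) := by
    rw [← Nat.factorial_succ]
    exact_mod_cast congrArg (Nat.cast : ℕ → ℝ) hf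
  push_cast at hf' ⊢
  linear_combination (((r+i).choose i : ℝ) * 2^j) * hf'
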